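/- For every 4×4 matrix A with all entries in {−1,1}, the integer per A is divisible by 4. -/

import Mathlib

open Matrix

/-- The permanent of a square integer matrix. -/
def per {n : ℕ} (A : Matrix (Fin n) (Fin n) ℤ) : ℤ :=
  ∑ σ : Equiv.Perm (Fin n), ∏ i, A i (σ i)

/-- If a finset of ±1 values has product 1 and card divisible by 4, sum divisible by 4. -/
lemma four_dvd_sum_of_prod_one {α : Type*} [DecidableEq α] (s : Finset α) (f : α → ℤ)
    (h : ∀ a ∈ s, f a = 1 ∨ f a = -1) (hp : ∏ a ∈ s, f a = 1) (hc : 4 ∣ s.card) :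
    (4 : ℤ) ∣ ∑ a ∈ s, f a := by
  classical
  set t := s.filter (fun a => f a = -1) with ht
  have hsum : ∑ a ∈ s, f a = (s.card : ℤ) - 2 * t.card := by
    rw [← Finset.sum_filter_add_sum_filter_not s (fun a => f a = -1)]
    have h1 : ∑ a ∈ t, f a = -(t.card : ℤ) := by
      rw [Finset.sum_congr rfl (fun a ha => (Finset.mem_filter.mp ha).2)]
      simp
      rfl
    have h2 : ∑ a ∈ s.filter (fun a => ¬ f a = -1), f a
        = ((s.filter (fun a => ¬ f a = -1)).card : ℤ) := by
      have key : ∀ a ∈ s.filter (fun a => ¬ f a = -1), f a = 1 := by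
        intro a ha
        rcases h a (Finset.mem_filter.mp ha).1 with h' | h'
        · exact h'
        · exact absurd h' (Finset.mem_filter.mp ha).2
      rw [Finset.sum_congr rfl key]
      simp
    rw [h1, h2]
    have := Finset.card_filter_add_card_filter_not (s := s)
      (p := fun a => f a = -1)
    push_cast [← this]
    ring
  have hprod : ∏ a ∈ s, f a = (-1 : ℤ) ^ t.card := by
    rw [← Finset.prod_filter_mul_prod_filter_not s (fun a => f a = -1)]
    have h1 : ∏ a ∈ t, f a = (-1 : ℤ) ^ t.card := by
      rw [Finset.prod_congr rfl (fun a ha => (Finset.mem_filter.mp ha).2)]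
      simp
      rfl
    have h2 : ∏ a ∈ s.filter (fun a => ¬ f a = -1), f a = 1 := by
      have key : ∀ a ∈ s.filter (fun a => ¬ f a = -1), f a = 1 := by
        intro a ha
        rcases h a (Finset.mem_filter.mp ha).1 with h' | h'
        · exact h'
        · exact absurd h' (Finset.mem_filter.mp ha).2
      rw [Finset.prod_congr rfl key]
      simp
    rw [h1, h2, mul_one]
  have hk : Even t.card := by
    rw [hprod] at hp
    exact (neg_one_pow_eq_one_iff_even (by norm_num)).mp hp
  obtain ⟨m, hm⟩ := hk
  obtain ⟨c, hcc⟩ := hc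
  rw [hsum, hm, hcc]
  push_cast
  ring_nf
  exact ⟨c - m, by ring⟩

theorem per_four_dvd (A : Matrix (Fin 4) (Fin 4) ℤ)
    (hA : ∀ i j, A i j = 1 ∨ A i j = -1) :
    (4 : ℤ) ∣ per A := by
  classical
  have hsq : ∀ i j, A i j ^ 2 = 1 := by
    intro i j
    rcases hA i j with h | h <;> rw [h] <;> ring
  -- each term is ±1
  have hterm : ∀ σ : Equiv.Perm (Fin 4), (∏ i, A i (σ i)) = 1 ∨ (∏ i, A i (σ i)) = -1 := by
    intro σ
    have : |∏ i, A i (σ i)| = 1 := by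
      rw [Finset.abs_prod]
      apply Finset.prod_eq_one
      intro i _
      rcases hA i (σ i) with h | h <;> rw [h] <;> simp
    exact (abs_eq (by norm_num)).mp this
  -- product of all terms is 1
  have hprod : ∏ σ : Equiv.Perm (Fin 4), ∏ i, A i (σ i) = 1 := by
    rw [Finset.prod_comm]
    apply Finset.prod_eq_one
    intro i _
    have : (∏ σ : Equiv.Perm (Fin 4), A i (σ i))
        = ∏ j ∈ Finset.univ.image (fun σ : Equiv.Perm (Fin 4) => σ i),
            A i j ^ (Finset.univ.filter (fun σ : Equiv.Perm (Fin 4) => σ i = j)).card := by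
      exact Finset.prod_comp (fun j => A i j) (fun σ : Equiv.Perm (Fin 4) => σ i)
    rw [this]
    apply Finset.prod_eq_one
    intro j hj
    have hcard : ∀ i' j' : Fin 4,
        (Finset.univ.filter (fun σ : Equiv.Perm (Fin 4) => σ i' = j')).card = 6 := by decide
    rw [hcard i j]
    calc A i j ^ 6 = (A i j ^ 2) ^ 3 := by ring
    _ = 1 := by rw [hsq]; ring
  have hcard : 4 ∣ (Finset.univ : Finset (Equiv.Perm (Fin 4))).card := by
    rw [Finset.card_univ, Fintype.card_perm]
    decide
  exact four_dvd_sum_of_prod_one _ _ (fun σ _ => hterm σ) hprod hcard
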